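/- Let $p$ be a complex polynomial of degree at most $m$ with $p(z)\neq 0$ for $|z|<\beta$ where $\beta>1$, and let $z_1,\ldots,z_d$ be its roots (with multiplicity), so $|z_j|\ge\beta$ for all $j$. Then for any branch $f$ of $\ln p$ on the disc $|z|<\beta$ and any $k\ge 1$, the Taylor remainder satisfies $\left|f(1)-f(0)-\sum_{s=1}^k \frac{f^{(s)}(0)}{s!}\right| \le \sum_{j=1}^{d} \sum_{s=k+1}^{\infty}\frac{1}{s\,|z_j|^{s}} \le \frac{m}{(k+1)\beta^{k}(\beta-1)}$. -/

import Mathlib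

open Polynomial

private lemma stmt11_ms_sum {M : Type*} [AddCommMonoid M] (s : Multiset ℂ) (g : ℂ → M) :
    (s.map g).sum = ∑ i : Fin s.toList.length, g (s.toList.get i) := by
  conv_lhs => rw [← Multiset.coe_toList s]
  rw [Multiset.map_coe, Multiset.sum_coe]
  conv_lhs => rw [← List.ofFn_get s.toList, List.map_ofFn]
  rw [List.sum_ofFn]
  rfl

private lemma stmt11_ms_prod {M : Type*} [CommMonoid M] (s : Multiset ℂ) (g : ℂ → M) :
    (s.map g).prod = ∏ i : Fin s.toList.length, g (s.toList.get i) := by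
  conv_lhs => rw [← Multiset.coe_toList s]
  rw [Multiset.map_coe, Multiset.prod_coe]
  conv_lhs => rw [← List.ofFn_get s.toList, List.map_ofFn]
  rw [List.prod_ofFn]
  rfl

private lemma stmt11_le (k : ℕ) {β r : ℝ} (hβ : 1 < β) (hr : β ≤ r) (n : ℕ) :
    1 / (((n + k + 1 : ℕ) : ℝ) * r ^ (n + k + 1))
      ≤ (1 / (((k:ℝ)+1) * β ^ (k+1))) * (β⁻¹) ^ n := by
  have hβ0 : (0:ℝ) < β := lt_trans one_pos hβ
  have hrw : (1 / (((k:ℝ)+1) * β ^ (k+1))) * (β⁻¹) ^ n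
      = 1 / ((((k:ℝ)+1) * β ^ (k+1)) * β ^ n) := by
    rw [inv_pow, one_div, one_div, ← mul_inv]
  rw [hrw]
  apply one_div_le_one_div_of_le (by positivity)
  push_cast
  calc (((k:ℝ)+1) * β ^ (k+1)) * β ^ n = ((k:ℝ)+1) * β ^ (n+k+1) := by
        rw [mul_assoc, ← pow_add]; ring_nf
    _ ≤ ((n:ℝ)+(k:ℝ)+1) * r ^ (n+k+1) := by
        have h1 : (0:ℝ) ≤ (n:ℝ) := Nat.cast_nonneg n
        gcongr <;> linarith

private lemma stmt11_geo_summable (k : ℕ) {β : ℝ} (hβ : 1 < β) :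
    Summable (fun n : ℕ => (1 / (((k:ℝ)+1) * β ^ (k+1))) * (β⁻¹) ^ n) := by
  have hβ0 : (0:ℝ) < β := lt_trans one_pos hβ
  exact (summable_geometric_of_lt_one (by positivity) (inv_lt_one_of_one_lt₀ hβ)).mul_left _

private lemma stmt11_summable (k : ℕ) {β r : ℝ} (hβ : 1 < β) (hr : β ≤ r) :
    Summable (fun n : ℕ => 1 / (((n + k + 1 : ℕ) : ℝ) * r ^ (n + k + 1))) := by
  have hβ0 : (0:ℝ) < β := lt_trans one_pos hβ
  have hr0 : (0:ℝ) < r := lt_of_lt_of_le hβ0 hr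
  exact Summable.of_nonneg_of_le (fun n => by positivity) (stmt11_le k hβ hr)
    (stmt11_geo_summable k hβ)

private lemma stmt11_tail (k : ℕ) {β r : ℝ} (hβ : 1 < β) (hr : β ≤ r) :
    ∑' n : ℕ, 1 / (((n + k + 1 : ℕ) : ℝ) * r ^ (n + k + 1))
      ≤ 1 / (((k:ℝ) + 1) * β ^ k * (β - 1)) := by
  have hβ0 : (0:ℝ) < β := lt_trans one_pos hβ
  have hβne : β ≠ 0 := ne_of_gt hβ0
  calc ∑' n : ℕ, 1 / (((n + k + 1 : ℕ) : ℝ) * r ^ (n + k + 1))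
      ≤ ∑' n : ℕ, (1 / (((k:ℝ)+1) * β ^ (k+1))) * (β⁻¹) ^ n :=
        Summable.tsum_le_tsum (stmt11_le k hβ hr) (stmt11_summable k hβ hr) (stmt11_geo_summable k hβ)
    _ = (1 / (((k:ℝ)+1) * β ^ (k+1))) * (1 - β⁻¹)⁻¹ := by
        rw [tsum_mul_left, tsum_geometric_of_lt_one (by positivity) (inv_lt_one_of_one_lt₀ hβ)]
    _ = 1 / (((k:ℝ) + 1) * β ^ k * (β - 1)) := by
        rw [one_div, one_div, ← mul_inv]
        congr 1
        field_simp
        ring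

/-- With `p` of degree at most `m`, nonvanishing on `|z| < β`
(`β > 1`), all roots `z_j` of `p` satisfy `|z_j| ≥ β`, and for any branch `f`
of `log p` on the disc and `k ≥ 1`, the Taylor remainder at `1` is bounded by
`∑_j ∑_{s > k} 1/(s |z_j|^s)`, which is at most `m/((k+1) β^k (β-1))`. -/
theorem stmt_11 (m k : ℕ) (hk : 1 ≤ k) (p : Polynomial ℂ) (hdeg : p.natDegree ≤ m)
    (β : ℝ) (hβ : 1 < β)
    (hp : ∀ z : ℂ, ‖z‖ < β → p.eval z ≠ 0)
    (f : ℂ → ℂ)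
    (hf : DifferentiableOn ℂ f (Metric.ball (0 : ℂ) β))
    (hfp : ∀ z ∈ Metric.ball (0 : ℂ) β, Complex.exp (f z) = p.eval z) :
    (∀ z ∈ p.roots, β ≤ ‖z‖) ∧
    ‖f 1 - f 0 - ∑ s ∈ Finset.Icc 1 k, iteratedDeriv s f 0 / (Nat.factorial s)‖
      ≤ (p.roots.map (fun z : ℂ =>
          ∑' s : ℕ, 1 / (((s + k + 1 : ℕ) : ℝ) * ‖z‖ ^ (s + k + 1)))).sum ∧
    (p.roots.map (fun z : ℂ =>
        ∑' s : ℕ, 1 / (((s + k + 1 : ℕ) : ℝ) * ‖z‖ ^ (s + k + 1)))).sum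
      ≤ m / ((k + 1) * β ^ k * (β - 1)) := by
  have hβ0 : (0:ℝ) < β := lt_trans one_pos hβ
  have h0mem : (0:ℂ) ∈ Metric.ball (0:ℂ) β := by simpa using hβ0
  have hp0 : p.eval 0 ≠ 0 := hp 0 (by simpa using hβ0)
  have hroots : ∀ z ∈ p.roots, β ≤ ‖z‖ := by
    intro z hz
    by_contra hlt
    exact hp z (lt_of_not_ge hlt) ((Polynomial.mem_roots'.mp hz).2)
  set l : List ℂ := p.roots.toList with hl
  set d : ℕ := l.length with hd
  set w : Fin d → ℂ := fun i => l.get i with hwdef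
  have hwmem : ∀ i : Fin d, w i ∈ p.roots := by
    intro i
    rw [← Multiset.mem_toList]
    exact List.get_mem l i
  have hw : ∀ i : Fin d, β ≤ ‖w i‖ := fun i => hroots _ (hwmem i)
  have hw0 : ∀ i : Fin d, w i ≠ 0 := by
    intro i h
    have := hw i
    rw [h] at this
    simp at this
    linarith
  have hwz : ∀ z : ℂ, ‖z‖ < β → ∀ i : Fin d, ‖z / w i‖ < 1 := by
    intro z hz i
    rw [norm_div, div_lt_one (lt_of_lt_of_le hβ0 (hw i))]
    exact lt_of_lt_of_le hz (hw i)
  have hslit : ∀ z : ℂ, ‖z‖ < β → ∀ i : Fin d, (1 - z / w i) ∈ Complex.slitPlane := by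
    intro z hz i
    have := Complex.mem_slitPlane_of_norm_lt_one (z := -(z / w i)) (by
      rw [norm_neg]; exact hwz z hz i)
    simpa [sub_eq_add_neg] using this
  have hne1 : ∀ z : ℂ, ‖z‖ < β → ∀ i : Fin d, (1 - z / w i) ≠ 0 := fun z hz i =>
    Complex.slitPlane_ne_zero (hslit z hz i)
  -- factorization
  have hfac : ∀ z : ℂ, p.eval z = p.leadingCoeff * ∏ i : Fin d, (z - w i) := by
    intro z
    conv_lhs => rw [(IsAlgClosed.splits p).eq_prod_roots]
    rw [eval_mul, eval_C, eval_multiset_prod, Multiset.map_map]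
    congr 1
    have := stmt11_ms_prod p.roots (fun a => z - a)
    rw [← this]
    congr 1
    ext a
    simp
  have hfac2 : ∀ z : ℂ, p.eval z = p.eval 0 * ∏ i : Fin d, (1 - z / w i) := by
    intro z
    have h1 : p.eval 0 = p.leadingCoeff * ∏ i : Fin d, (-w i) := by
      rw [hfac 0]; congr 1; apply Finset.prod_congr rfl; intro i _; ring
    rw [hfac z, h1]
    rw [mul_assoc, ← Finset.prod_mul_distrib]
    congr 1
    apply Finset.prod_congr rfl
    intro i _
    have hwi := hw0 i
    field_simp
    ring
  -- the explicit branch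
  set h : ℂ → ℂ := fun z => f 0 + ∑ i : Fin d, Complex.log (1 - z / w i) with hhdef
  have hhd : ∀ z ∈ Metric.ball (0:ℂ) β, DifferentiableAt ℂ h z := by
    intro z hz
    apply (differentiableAt_const (f 0)).add
    apply DifferentiableAt.fun_sum
    intro i _
    exact ((differentiableAt_const (1:ℂ)).sub (differentiableAt_id.div_const (w i))).clog
      (hslit z (mem_ball_zero_iff.mp hz) i)
  have hexph : ∀ z : ℂ, ‖z‖ < β → Complex.exp (h z) = p.eval z := by
    intro z hz
    rw [hhdef]
    simp only
    rw [Complex.exp_add, Complex.exp_sum, hfp 0 h0mem, hfac2 z]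
    congr 1
    apply Finset.prod_congr rfl
    intro i _
    exact Complex.exp_log (hne1 z hz i)
  have hfh : ∀ z ∈ Metric.ball (0:ℂ) β, f z = h z := by
    have hF0 : ∀ z ∈ Metric.ball (0:ℂ) β,
        HasDerivWithinAt (fun y => f y - h y) 0 (Metric.ball (0:ℂ) β) z := by
      intro z hz
      have hfz : DifferentiableAt ℂ f z :=
        hf.differentiableAt (Metric.isOpen_ball.mem_nhds hz)
      have hhz : DifferentiableAt ℂ h z := hhd z hz
      have hFd : HasDerivAt (fun y => f y - h y) (deriv f z - deriv h z) z :=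
        hfz.hasDerivAt.sub hhz.hasDerivAt
      have hexpF : (fun y => Complex.exp (f y - h y)) =ᶠ[nhds z] fun _ => (1:ℂ) := by
        filter_upwards [Metric.isOpen_ball.mem_nhds hz] with y hy
        rw [Complex.exp_sub, hfp y hy, hexph y (mem_ball_zero_iff.mp hy),
          div_self (hp y (mem_ball_zero_iff.mp hy))]
      have h1 : HasDerivAt (fun y => Complex.exp (f y - h y))
          (Complex.exp (f z - h z) * (deriv f z - deriv h z)) z := hFd.cexp
      have h2 : HasDerivAt (fun y => Complex.exp (f y - h y)) 0 z :=
        (hasDerivAt_const z (1:ℂ)).congr_of_eventuallyEq hexpF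
      have h3 : Complex.exp (f z - h z) * (deriv f z - deriv h z) = 0 := h1.unique h2
      have h4 : deriv f z - deriv h z = 0 := by
        rcases mul_eq_zero.mp h3 with h | h
        · exact absurd h (Complex.exp_ne_zero _)
        · exact h
      rw [h4] at hFd
      exact hFd.hasDerivWithinAt
    intro z hz
    have hb := (convex_ball (0:ℂ) β).norm_image_sub_le_of_norm_hasDerivWithin_le
      (C := 0) hF0 (fun x _ => by simp) h0mem hz
    have hF00 : f 0 - h 0 = 0 := by
      rw [hhdef]; simp [Complex.log_one]
    have h5 : ‖f z - h z‖ ≤ 0 := by simpa [hF00] using hb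
    exact sub_eq_zero.mp (norm_le_zero_iff.mp h5)
  -- power series coefficients
  set B : ℕ → ℂ := fun n => (if n = 0 then f 0 else 0) + ∑ i : Fin d, -(((n : ℂ) * w i ^ n)⁻¹)
    with hBdef
  have hBsum : ∀ z : ℂ, ‖z‖ < β → HasSum (fun n : ℕ => B n * z ^ n) (f z) := by
    intro z hz
    have h1 : ∀ i : Fin d, HasSum (fun n : ℕ => -(((n : ℂ) * w i ^ n)⁻¹) * z ^ n)
        (Complex.log (1 - z / w i)) := by
      intro i
      have h2 := (Complex.hasSum_taylorSeries_neg_log (hwz z hz i)).neg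
      rw [neg_neg] at h2
      convert h2 using 2 with n
      case e'_3 => rfl
      rw [div_pow, div_div]
      rw [neg_mul, div_eq_mul_inv, ← neg_mul, mul_comm ((n:ℂ)) (w i ^ n)]
      ring
    have h2 : HasSum (fun n : ℕ => ∑ i : Fin d, -(((n : ℂ) * w i ^ n)⁻¹) * z ^ n)
        (∑ i : Fin d, Complex.log (1 - z / w i)) :=
      hasSum_sum (fun i _ => h1 i)
    have h3 : HasSum (fun n : ℕ => (if n = 0 then f 0 else 0) * z ^ n) (f 0) := by
      have h4 : HasSum (fun n : ℕ => if n = 0 then f 0 else 0) (f 0) := hasSum_ite_eq 0 (f 0)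
      convert h4 using 2 with n
      split_ifs with hn
      · subst hn; simp
      · simp
    have h5 := h3.add h2
    have hfz : f z = f 0 + ∑ i : Fin d, Complex.log (1 - z / w i) := by
      rw [hfh z (mem_ball_zero_iff.mpr hz), hhdef]
    rw [hfz]
    convert h5 using 2 with n
    rw [hBdef]
    simp only
    rw [add_mul, Finset.sum_mul]
  have hB0 : B 0 = f 0 := by rw [hBdef]; simp
  -- radius bound and power series structure
  have hps : HasFPowerSeriesOnBall f (FormalMultilinearSeries.ofScalars ℂ B) 0 1 := by
    constructor
    · apply FormalMultilinearSeries.le_radius_of_bound _ (‖f 0‖ + d)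
      intro n
      simp only [FormalMultilinearSeries.ofScalars_norm, NNReal.coe_one, one_pow, mul_one]
      rw [hBdef]
      simp only
      refine (norm_add_le _ _).trans (add_le_add ?_ ?_)
      · split_ifs <;> simp
      · refine (norm_sum_le _ _).trans ?_
        have hle1 : ∀ i : Fin d, ‖-(((n : ℂ) * w i ^ n)⁻¹)‖ ≤ 1 := by
          intro i
          rw [norm_neg, norm_inv, norm_mul, norm_pow, Complex.norm_natCast]
          rcases Nat.eq_zero_or_pos n with hn | hn
          · subst hn; simp
          · have hwi : (1:ℝ) ≤ ‖w i‖ := le_trans hβ.le (hw i)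
            have hpw : (1:ℝ) ≤ ‖w i‖ ^ n := one_le_pow₀ hwi
            have hn1 : (1:ℝ) ≤ (n:ℝ) := by exact_mod_cast hn
            have h7 : (1:ℝ) ≤ (n:ℝ) * ‖w i‖ ^ n := by nlinarith
            have h8 := one_div_le_one_div_of_le one_pos h7
            simpa using h8
        calc ∑ i : Fin d, ‖-(((n : ℂ) * w i ^ n)⁻¹)‖ ≤ ∑ i : Fin d, (1:ℝ) :=
              Finset.sum_le_sum (fun i _ => hle1 i)
          _ = d := by simp
    · exact one_pos
    · intro y hy
      have hy1 : ‖y‖ < 1 := by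
        simpa [← ofReal_norm] using hy
      have := hBsum y (lt_trans hy1 hβ)
      rw [zero_add]
      convert this using 2 with n
      case e'_3 => rfl
      rw [FormalMultilinearSeries.ofScalars_apply_eq, smul_eq_mul]
  have hiter : ∀ n : ℕ, iteratedDeriv n f 0 = (n.factorial : ℂ) * B n := by
    intro n
    have h6 := hps.factorial_smul (y := (1:ℂ)) n
    rw [FormalMultilinearSeries.ofScalars_apply_eq, one_pow, smul_eq_mul, mul_one,
      nsmul_eq_mul] at h6
    rw [iteratedDeriv_eq_iteratedFDeriv, ← h6]
  -- coefficients of the Taylor polynomial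
  have hcoef : ∀ s : ℕ, iteratedDeriv s f 0 / (Nat.factorial s : ℂ) = B s := by
    intro s
    rw [hiter s, mul_comm, mul_div_assoc, div_self, mul_one]
    exact_mod_cast (Nat.factorial_ne_zero s)
  have hsplit : Finset.range (k+1) = insert 0 (Finset.Icc 1 k) := by
    ext x
    simp only [Finset.mem_range, Finset.mem_insert, Finset.mem_Icc]
    omega
  have hsum0 : ∑ n ∈ Finset.range (k+1), B n = f 0 + ∑ s ∈ Finset.Icc 1 k, B s := by
    rw [hsplit, Finset.sum_insert (by simp), hB0]
  have h1mem : ‖(1:ℂ)‖ < β := by simpa using hβ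
  have hS1 : HasSum B (f 1) := by simpa using hBsum 1 h1mem
  have hR : HasSum (fun n : ℕ => B (n + (k+1)))
      (f 1 - ∑ n ∈ Finset.range (k+1), B n) := by
    apply (hasSum_nat_add_iff (k+1)).mpr
    rwa [sub_add_cancel]
  have hRe : f 1 - f 0 - ∑ s ∈ Finset.Icc 1 k, iteratedDeriv s f 0 / (Nat.factorial s : ℂ)
      = f 1 - ∑ n ∈ Finset.range (k+1), B n := by
    have h10 : ∑ s ∈ Finset.Icc 1 k, iteratedDeriv s f 0 / (Nat.factorial s : ℂ)
        = ∑ s ∈ Finset.Icc 1 k, B s := Finset.sum_congr rfl (fun s _ => hcoef s)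
    rw [h10, hsum0]
    ring
  set g : Fin d → ℕ → ℝ :=
    fun i n => 1 / (((n + k + 1 : ℕ) : ℝ) * ‖w i‖ ^ (n + k + 1)) with hgdef
  have hgs : ∀ i : Fin d, Summable (g i) := fun i => stmt11_summable k hβ (hw i)
  have hnB : ∀ n : ℕ, ‖B (n + (k+1))‖ ≤ ∑ i : Fin d, g i n := by
    intro n
    rw [hBdef]
    simp only
    have hnz : ¬(n + (k+1) = 0) := by omega
    rw [if_neg hnz, zero_add]
    refine (norm_sum_le _ _).trans (Finset.sum_le_sum fun i _ => ?_)
    rw [norm_neg, norm_inv, norm_mul, norm_pow, Complex.norm_natCast, ← one_div, hgdef]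
    simp only
    apply le_of_eq
    norm_num [← add_assoc]
  have hsummB : Summable (fun n : ℕ => ‖B (n + (k+1))‖) :=
    Summable.of_nonneg_of_le (fun n => norm_nonneg _) hnB (summable_sum fun i _ => hgs i)
  have hnormR : ‖f 1 - ∑ n ∈ Finset.range (k+1), B n‖ ≤ ∑ i : Fin d, ∑' n, g i n := by
    rw [← hR.tsum_eq]
    calc ‖∑' n, B (n + (k+1))‖ ≤ ∑' n, ‖B (n + (k+1))‖ := norm_tsum_le_tsum_norm hsummB
      _ ≤ ∑' n, ∑ i : Fin d, g i n :=
          Summable.tsum_le_tsum hnB hsummB (summable_sum fun i _ => hgs i)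
      _ = ∑ i : Fin d, ∑' n, g i n := Summable.tsum_finsetSum fun i _ => hgs i
  have hmid : (p.roots.map (fun z : ℂ =>
      ∑' s : ℕ, 1 / (((s + k + 1 : ℕ) : ℝ) * ‖z‖ ^ (s + k + 1)))).sum
      = ∑ i : Fin d, ∑' n, g i n :=
    stmt11_ms_sum p.roots _
  have hdm : d ≤ m := by
    have h9 : d = Multiset.card p.roots := by rw [hd, hl, Multiset.length_toList]
    rw [h9]
    exact le_trans (Polynomial.card_roots' p) hdeg
  refine ⟨hroots, ?_, ?_⟩
  · rw [hRe, hmid]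
    exact hnormR
  · rw [hmid]
    have hc : (0:ℝ) ≤ 1 / (((k:ℝ) + 1) * β ^ k * (β - 1)) := by
      have hb1 : (0:ℝ) < β - 1 := by linarith
      positivity
    calc ∑ i : Fin d, ∑' n, g i n
        ≤ ∑ _i : Fin d, 1 / (((k:ℝ) + 1) * β ^ k * (β - 1)) :=
          Finset.sum_le_sum (fun i _ => stmt11_tail k hβ (hw i))
      _ = (d : ℝ) * (1 / (((k:ℝ) + 1) * β ^ k * (β - 1))) := by
          rw [Finset.sum_const, Finset.card_univ, Fintype.card_fin, nsmul_eq_mul]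
      _ ≤ (m : ℝ) * (1 / (((k:ℝ) + 1) * β ^ k * (β - 1))) := by
          apply mul_le_mul_of_nonneg_right _ hc
          exact_mod_cast hdm
      _ = (m : ℝ) / (((k:ℝ) + 1) * β ^ k * (β - 1)) := (div_eq_mul_one_div _ _).symm
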